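/- arXiv:0806.3191 — 4 statements merged into one kernel-verified Lean document; each statement's English description precedes it below -/
import Mathlib

section
/- For 0 < ω ≤ 4/√π, the minimum of the Thomas-Fermi functional E^{TF}[ρ] = ∫_{B₁} (ρ² − ω²r²ρ/4) dx over nonnegative densities ρ with ∫_{B₁} ρ = 1 equals 1/π − ω²/8 − πω⁴/768, and is attained by ρ^{TF}(r) = 1/π + ω²/16 − (ω²/8)(1−r²). -/
open Real MeasureTheory

lemma vol_ball2 : (volume (Metric.ball (0 : EuclideanSpace ℝ (Fin 2)) 1)).toReal = π := by
  rw [EuclideanSpace.volume_ball]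
  have h2 : Real.Gamma ((Fintype.card (Fin 2) : ℝ) / 2 + 1) = 1 := by
    norm_num [Real.Gamma_two]
  rw [h2]
  simp [Real.sq_sqrt Real.pi_pos.le, ENNReal.toReal_ofReal Real.pi_pos.le]

lemma norm_pow_int (k : ℕ) :
    ∫ x in Metric.ball (0 : EuclideanSpace ℝ (Fin 2)) 1, ‖x‖ ^ k = 2 * π / (k + 2) := by
  have h := MeasureTheory.integral_fun_norm_addHaar
    (volume : Measure (EuclideanSpace ℝ (Fin 2)))
    (Set.indicator (Set.Iio (1:ℝ)) (fun r : ℝ => r ^ k))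
  have hdim : Module.finrank ℝ (EuclideanSpace ℝ (Fin 2)) = 2 := finrank_euclideanSpace_fin
  rw [hdim] at h
  have hl : ∫ x in Metric.ball (0 : EuclideanSpace ℝ (Fin 2)) 1, ‖x‖ ^ k
      = ∫ x : EuclideanSpace ℝ (Fin 2),
        Set.indicator (Set.Iio (1:ℝ)) (fun r : ℝ => r ^ k) ‖x‖ := by
    rw [← MeasureTheory.integral_indicator measurableSet_ball]
    congr 1
    funext x
    by_cases hx : x ∈ Metric.ball (0 : EuclideanSpace ℝ (Fin 2)) 1
    · have : ‖x‖ ∈ Set.Iio (1:ℝ) := by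
        simpa [Metric.mem_ball, dist_zero_right] using hx
      simp [Set.indicator_of_mem hx, Set.indicator_of_mem this]
    · have : ‖x‖ ∉ Set.Iio (1:ℝ) := by
        simpa [Metric.mem_ball, dist_zero_right] using hx
      simp [Set.indicator_of_notMem hx, Set.indicator_of_notMem this]
  have hr : ∫ y in Set.Ioi (0:ℝ), y ^ (2 - 1) •
      Set.indicator (Set.Iio (1:ℝ)) (fun r : ℝ => r ^ k) y = 1 / (k + 2) := by
    have : ∀ y : ℝ, y ^ (2 - 1) • Set.indicator (Set.Iio (1:ℝ)) (fun r : ℝ => r ^ k) y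
        = Set.indicator (Set.Iio (1:ℝ)) (fun r : ℝ => r ^ (k + 1)) y := by
      intro y
      by_cases hy : y ∈ Set.Iio (1:ℝ) <;>
        simp [Set.indicator_of_mem, Set.indicator_of_notMem, hy, pow_succ, mul_comm]
    simp_rw [this]
    rw [MeasureTheory.setIntegral_indicator measurableSet_Iio,
      show Set.Ioi (0:ℝ) ∩ Set.Iio 1 = Set.Ioo 0 1 from Set.Ioi_inter_Iio,
      ← MeasureTheory.integral_Ioc_eq_integral_Ioo,
      ← intervalIntegral.integral_of_le (by norm_num : (0:ℝ) ≤ 1)]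
    rw [integral_pow]
    push_cast
    ring
  rw [hl, h, hr, measureReal_def, vol_ball2]
  push_cast
  simp only [smul_eq_mul, nsmul_eq_mul]
  push_cast
  ring

lemma intOn_pow (k : ℕ) :
    IntegrableOn (fun x : EuclideanSpace ℝ (Fin 2) => ‖x‖ ^ k)
      (Metric.ball (0 : EuclideanSpace ℝ (Fin 2)) 1) volume := by
  exact ((continuous_norm.pow k).continuousOn.integrableOn_compact
    (isCompact_closedBall (0 : EuclideanSpace ℝ (Fin 2)) 1)).mono_set
    Metric.ball_subset_closedBall

lemma poly_int (p q r : ℝ) :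
    ∫ x in Metric.ball (0 : EuclideanSpace ℝ (Fin 2)) 1,
      (p * ‖x‖ ^ 0 + q * ‖x‖ ^ 2 + r * ‖x‖ ^ 4) = p * π + q * (π / 2) + r * (π / 3) := by
  have i0 : IntegrableOn (fun x : EuclideanSpace ℝ (Fin 2) => p * ‖x‖ ^ 0)
      (Metric.ball (0 : EuclideanSpace ℝ (Fin 2)) 1) volume := (intOn_pow 0).const_mul p
  have i2 : IntegrableOn (fun x : EuclideanSpace ℝ (Fin 2) => q * ‖x‖ ^ 2)
      (Metric.ball (0 : EuclideanSpace ℝ (Fin 2)) 1) volume := (intOn_pow 2).const_mul q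
  have i4 : IntegrableOn (fun x : EuclideanSpace ℝ (Fin 2) => r * ‖x‖ ^ 4)
      (Metric.ball (0 : EuclideanSpace ℝ (Fin 2)) 1) volume := (intOn_pow 4).const_mul r
  have i02 : IntegrableOn (fun x : EuclideanSpace ℝ (Fin 2) => p * ‖x‖ ^ 0 + q * ‖x‖ ^ 2)
      (Metric.ball (0 : EuclideanSpace ℝ (Fin 2)) 1) volume := i0.add i2
  rw [MeasureTheory.integral_add i02 i4, MeasureTheory.integral_add i0 i2,
    MeasureTheory.integral_const_mul, MeasureTheory.integral_const_mul,
    MeasureTheory.integral_const_mul, norm_pow_int 0, norm_pow_int 2, norm_pow_int 4]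
  push_cast
  ring

theorem tf_minimization_no_hole (ω : ℝ) (hω0 : 0 < ω) (hω : ω ≤ 4 / Real.sqrt π)
    (ρTF : ℝ → ℝ) (hρTF : ∀ r, ρTF r = 1 / π + ω ^ 2 / 16 - ω ^ 2 / 8 * (1 - r ^ 2)) :
    (∀ ρ : EuclideanSpace ℝ (Fin 2) → ℝ,
      (∀ x, 0 ≤ ρ x) →
      IntegrableOn ρ (Metric.ball (0 : EuclideanSpace ℝ (Fin 2)) 1) →
      IntegrableOn (fun x => ρ x ^ 2) (Metric.ball (0 : EuclideanSpace ℝ (Fin 2)) 1) →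
      (∫ x in Metric.ball (0 : EuclideanSpace ℝ (Fin 2)) 1, ρ x) = 1 →
      1 / π - ω ^ 2 / 8 - π * ω ^ 4 / 768 ≤
        ∫ x in Metric.ball (0 : EuclideanSpace ℝ (Fin 2)) 1,
          (ρ x ^ 2 - ω ^ 2 * ‖x‖ ^ 2 * ρ x / 4)) ∧
    (∫ x in Metric.ball (0 : EuclideanSpace ℝ (Fin 2)) 1,
        (ρTF ‖x‖ ^ 2 - ω ^ 2 * ‖x‖ ^ 2 * ρTF ‖x‖ / 4))
      = 1 / π - ω ^ 2 / 8 - π * ω ^ 4 / 768 := by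
  have hπ : (0:ℝ) < π := Real.pi_pos
  set B := Metric.ball (0 : EuclideanSpace ℝ (Fin 2)) 1 with hB
  set c : ℝ := 2 / π - ω ^ 2 / 8 with hc
  -- second part
  have part2 : (∫ x in B, (ρTF ‖x‖ ^ 2 - ω ^ 2 * ‖x‖ ^ 2 * ρTF ‖x‖ / 4))
      = 1 / π - ω ^ 2 / 8 - π * ω ^ 4 / 768 := by
    have heq : ∀ x : EuclideanSpace ℝ (Fin 2),
        ρTF ‖x‖ ^ 2 - ω ^ 2 * ‖x‖ ^ 2 * ρTF ‖x‖ / 4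
        = (1 / π - ω ^ 2 / 16) ^ 2 * ‖x‖ ^ 0 + 0 * ‖x‖ ^ 2
          + (-(ω ^ 2 / 8) ^ 2) * ‖x‖ ^ 4 := by
      intro x; rw [hρTF]; ring
    rw [MeasureTheory.setIntegral_congr_fun measurableSet_ball
      (fun x _ => heq x), poly_int]
    field_simp
    ring
  refine ⟨?_, part2⟩
  intro ρ hρ0 hInt hInt2 hMass
  -- integrability facts
  have hIg2 : IntegrableOn (fun x : EuclideanSpace ℝ (Fin 2) => ρTF ‖x‖ ^ 2) B volume := by
    have : (fun x : EuclideanSpace ℝ (Fin 2) => ρTF ‖x‖ ^ 2)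
        = fun x => (1 / π - ω ^ 2 / 16) ^ 2 * ‖x‖ ^ 0
          + (2 * (1 / π - ω ^ 2 / 16) * (ω ^ 2 / 8)) * ‖x‖ ^ 2
          + (ω ^ 2 / 8) ^ 2 * ‖x‖ ^ 4 := by
      funext x; rw [hρTF]; ring
    rw [this]
    exact (((intOn_pow 0).const_mul _).add ((intOn_pow 2).const_mul _)).add
      ((intOn_pow 4).const_mul _)
  have hIlhs : IntegrableOn (fun x => c * ρ x - ρTF ‖x‖ ^ 2) B volume :=
    (hInt.const_mul c).sub hIg2
  have hIcross : IntegrableOn (fun x : EuclideanSpace ℝ (Fin 2) =>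
      ω ^ 2 * ‖x‖ ^ 2 * ρ x / 4) B volume := by
    refine Integrable.mono (hInt.const_mul (ω ^ 2 / 4)) ?_ ?_
    · have hm : AEStronglyMeasurable
          (fun x : EuclideanSpace ℝ (Fin 2) => (4:ℝ)⁻¹ * (ω ^ 2 * ‖x‖ ^ 2 * ρ x))
          (volume.restrict B) :=
        ((continuous_const.mul (continuous_norm.pow 2)).aestronglyMeasurable.mul
          hInt.aestronglyMeasurable).const_mul _
      exact hm.congr (Filter.Eventually.of_forall fun x => by ring)
    · filter_upwards [MeasureTheory.ae_restrict_mem measurableSet_ball] with x hx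
      have hx1 : ‖x‖ ≤ 1 := by
        have := Metric.mem_ball.mp hx
        rw [dist_zero_right] at this
        linarith
      have h0 : (0:ℝ) ≤ ρ x := hρ0 x
      have hn : (0:ℝ) ≤ ‖x‖ := norm_nonneg x
      rw [Real.norm_eq_abs, Real.norm_eq_abs, abs_of_nonneg, abs_of_nonneg]
      · nlinarith [mul_nonneg (mul_nonneg (sq_nonneg ω) h0)
          (sub_nonneg.2 (pow_le_one₀ hn hx1 (n := 2)))]
      · positivity
      · positivity
  have hIrhs : IntegrableOn (fun x => ρ x ^ 2 - ω ^ 2 * ‖x‖ ^ 2 * ρ x / 4) B volume :=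
    hInt2.sub hIcross
  have hle : ∀ x ∈ B, c * ρ x - ρTF ‖x‖ ^ 2 ≤ ρ x ^ 2 - ω ^ 2 * ‖x‖ ^ 2 * ρ x / 4 := by
    intro x _
    have h2g : 2 * ρTF ‖x‖ - ω ^ 2 * ‖x‖ ^ 2 / 4 = c := by rw [hρTF, hc]; ring
    have h2g' : (2 * ρTF ‖x‖ - ω ^ 2 * ‖x‖ ^ 2 / 4) * ρ x = c * ρ x := by rw [h2g]
    nlinarith [sq_nonneg (ρ x - ρTF ‖x‖), h2g']
  have hmono := MeasureTheory.setIntegral_mono_on hIlhs hIrhs measurableSet_ball hle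
  have hval : (∫ x in B, (c * ρ x - ρTF ‖x‖ ^ 2))
      = 1 / π - ω ^ 2 / 8 - π * ω ^ 4 / 768 := by
    rw [MeasureTheory.integral_sub (hInt.const_mul c) hIg2,
      MeasureTheory.integral_const_mul, hMass]
    have hg2 : (∫ x in B, ρTF ‖x‖ ^ 2)
        = (1 / π - ω ^ 2 / 16) ^ 2 * π
          + (2 * (1 / π - ω ^ 2 / 16) * (ω ^ 2 / 8)) * (π / 2)
          + (ω ^ 2 / 8) ^ 2 * (π / 3) := by
      rw [MeasureTheory.setIntegral_congr_fun measurableSet_ball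
        (fun x _ => by rw [hρTF]; ring :
          ∀ x ∈ B, ρTF ‖x‖ ^ 2 = (1 / π - ω ^ 2 / 16) ^ 2 * ‖x‖ ^ 0
            + (2 * (1 / π - ω ^ 2 / 16) * (ω ^ 2 / 8)) * ‖x‖ ^ 2
            + (ω ^ 2 / 8) ^ 2 * ‖x‖ ^ 4), poly_int]
    rw [hg2, hc]
    field_simp
    ring
  linarith [hmono, hval.ge]
end

section
/- For ω > 4/√π, evaluating the Thomas-Fermi functional at ρ^{TF}(r) = (ω²/8)[r² − R_h²]₊ with R_h² = 1 − 4/(√π ω) gives E^{TF}[ρ^{TF}] = −(ω²/4)(1 − 8/(3√π ω)). -/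
open Real MeasureTheory

theorem tf_energy_hole (ω : ℝ) (hω : ω > 4 / Real.sqrt π)
    (Rh2 : ℝ) (hRh2 : Rh2 = 1 - 4 / (Real.sqrt π * ω))
    (ρTF : ℝ → ℝ) (hρTF : ∀ r, ρTF r = ω ^ 2 / 8 * max 0 (r ^ 2 - Rh2)) :
    (∫ x in Metric.ball (0 : EuclideanSpace ℝ (Fin 2)) 1,
        (ρTF ‖x‖ ^ 2 - ω ^ 2 * ‖x‖ ^ 2 * ρTF ‖x‖ / 4))
      = -(ω ^ 2 / 4) * (1 - 8 / (3 * Real.sqrt π * ω)) := by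
  have hs : (0:ℝ) < Real.sqrt π := Real.sqrt_pos.2 Real.pi_pos
  have hω0 : (0:ℝ) < ω := lt_trans (div_pos (by norm_num) hs) hω
  have hR1 : Rh2 < 1 := by
    rw [hRh2]; nlinarith [div_pos (by norm_num : (0:ℝ) < 4) (mul_pos hs hω0)]
  have hR0 : 0 < Rh2 := by
    rw [hRh2]
    have h4 : 4 / (Real.sqrt π * ω) < 1 := by
      rw [div_lt_one (mul_pos hs hω0)]
      calc (4:ℝ) = (4 / Real.sqrt π) * Real.sqrt π := by field_simp
      _ < ω * Real.sqrt π := by nlinarith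
      _ = Real.sqrt π * ω := by ring
    linarith
  set F : ℝ → ℝ := fun r =>
    (ω ^ 2 / 8 * max 0 (r ^ 2 - Rh2)) ^ 2
      - ω ^ 2 * r ^ 2 * (ω ^ 2 / 8 * max 0 (r ^ 2 - Rh2)) / 4 with hF
  have h1 : (∫ x in Metric.ball (0 : EuclideanSpace ℝ (Fin 2)) 1,
        (ρTF ‖x‖ ^ 2 - ω ^ 2 * ‖x‖ ^ 2 * ρTF ‖x‖ / 4))
      = ∫ x : EuclideanSpace ℝ (Fin 2), Set.indicator (Set.Iio (1:ℝ)) F ‖x‖ := by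
    rw [← integral_indicator measurableSet_ball]
    congr 1; ext x
    by_cases h : ‖x‖ < 1
    · rw [Set.indicator_of_mem (mem_ball_zero_iff.2 h),
        Set.indicator_of_mem (show ‖x‖ ∈ Set.Iio (1:ℝ) from h), hρTF]
    · rw [Set.indicator_of_notMem (by simpa [mem_ball_zero_iff] using h),
        Set.indicator_of_notMem (show ‖x‖ ∉ Set.Iio (1:ℝ) from h)]
  rw [h1, integral_fun_norm_addHaar volume (Set.indicator (Set.Iio (1:ℝ)) F)]
  have hdim : Module.finrank ℝ (EuclideanSpace ℝ (Fin 2)) = 2 := finrank_euclideanSpace_fin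
  rw [hdim]
  have hvol : (volume (Metric.ball (0 : EuclideanSpace ℝ (Fin 2)) 1)).toReal = π := by
    rw [EuclideanSpace.volume_ball]
    have : Real.Gamma ((Fintype.card (Fin 2) : ℝ) / 2 + 1) = 1 := by
      norm_num [Real.Gamma_two]
    rw [this]
    simp [Real.sq_sqrt Real.pi_pos.le, ENNReal.toReal_ofReal Real.pi_pos.le]
  rw [measureReal_def, hvol]
  -- inner integral
  have h2 : (∫ y in Set.Ioi (0:ℝ), y ^ (2 - 1) • Set.indicator (Set.Iio (1:ℝ)) F y)
      = ∫ y in (0:ℝ)..1, y * F y := by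
    have : ∀ y : ℝ, y ^ (2 - 1) • Set.indicator (Set.Iio (1:ℝ)) F y
        = Set.indicator (Set.Iio (1:ℝ)) (fun y => y * F y) y := by
      intro y
      by_cases h : y ∈ Set.Iio (1:ℝ) <;>
        simp [Set.indicator_of_mem, Set.indicator_of_notMem, h]
    simp_rw [this]
    rw [setIntegral_indicator measurableSet_Iio]
    rw [show Set.Ioi (0:ℝ) ∩ Set.Iio 1 = Set.Ioo 0 1 from Set.Ioi_inter_Iio,
      ← integral_Ioc_eq_integral_Ioo,
      intervalIntegral.integral_of_le (by norm_num : (0:ℝ) ≤ 1)]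
  rw [h2]
  -- split the interval integral at √Rh2
  set c : ℝ := Real.sqrt Rh2 with hc
  have hc0 : 0 < c := Real.sqrt_pos.2 hR0
  have hc1 : c < 1 := by
    rw [hc, show (1:ℝ) = Real.sqrt 1 by simp]
    exact Real.sqrt_lt_sqrt hR0.le hR1
  have hcsq : c ^ 2 = Rh2 := Real.sq_sqrt hR0.le
  have hcont : Continuous fun y : ℝ => y * F y := by
    rw [hF]; fun_prop
  have hsplit : (∫ y in (0:ℝ)..1, y * F y)
      = (∫ y in (0:ℝ)..c, y * F y) + ∫ y in c..1, y * F y := by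
    rw [intervalIntegral.integral_add_adjacent_intervals
      (hcont.intervalIntegrable _ _) (hcont.intervalIntegrable _ _)]
  have hzero : (∫ y in (0:ℝ)..c, y * F y) = 0 := by
    rw [intervalIntegral.integral_congr (g := fun _ => (0:ℝ))]
    · simp
    · intro y hy
      rw [Set.uIcc_of_le hc0.le] at hy
      have hy2 : y ^ 2 ≤ Rh2 := by
        rw [← hcsq]; nlinarith [hy.1, hy.2]
      have : max 0 (y ^ 2 - Rh2) = 0 := max_eq_left (by linarith)
      simp [hF, this]
  have hmain : (∫ y in c..1, y * F y)
      = -(ω ^ 2 / 8) ^ 2 * ((1 - c ^ 6) / 6 - Rh2 ^ 2 * ((1 - c ^ 2) / 2)) := by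
    rw [intervalIntegral.integral_congr
      (g := fun y => -(ω ^ 2 / 8) ^ 2 * (y ^ 5 - Rh2 ^ 2 * y))]
    · rw [intervalIntegral.integral_const_mul, intervalIntegral.integral_sub
        (by apply Continuous.intervalIntegrable; fun_prop)
        (by apply Continuous.intervalIntegrable; fun_prop),
        intervalIntegral.integral_const_mul, integral_pow, integral_id]
      norm_num
    · intro y hy
      rw [Set.uIcc_of_le hc1.le] at hy
      have hy2 : Rh2 ≤ y ^ 2 := by
        rw [← hcsq]; nlinarith [hy.1, hy.2, hc0]
      have hmax : max 0 (y ^ 2 - Rh2) = y ^ 2 - Rh2 := max_eq_right (by linarith)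
      simp only [hF, hmax]
      ring
  rw [hsplit, hzero, hmain, zero_add]
  rw [show c ^ 6 = (c ^ 2) ^ 3 by ring, hcsq]
  -- final algebra
  rw [hRh2]
  rw [show π = Real.sqrt π ^ 2 from (Real.sq_sqrt Real.pi_pos.le).symm]
  set s := Real.sqrt π
  simp only [nsmul_eq_mul, smul_eq_mul, Nat.cast_ofNat]
  field_simp
  simp only [Real.sqrt_sq hs.le]
  ring
end

section
/- For every nonnegative integrable ρ on the unit disc B₁ with ∫_{B₁} ρ = 1 and ρ ∈ L², one has ∫_{B₁}(ρ² − ω²r²ρ/4) dx − E^{TF} ≥ ∫_{B₁} (ρ − ρ^{TF})² dx, where ρ^{TF} is the TF minimizer and E^{TF} the TF minimum; equivalently, the excess TF energy dominates the squared L² distance to the minimizer. (Here one uses the pointwise inequality 2ρ^{TF}(r) ≥ ε²μ^{TF} + ω²r²/4 and the identity μ^{TF} = E^{TF} + ‖ρ^{TF}‖₂² in rescaled units.) -/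
open Real MeasureTheory

theorem tf_excess_energy_bounds_L2_distance (ω : ℝ) (hω : 0 < ω) (μ : ℝ)
    (ρTF : ℝ → ℝ) (hρTF : ∀ r, ρTF r = 1 / 2 * max 0 (μ + ω ^ 2 * r ^ 2 / 4))
    (hnorm : (∫ x in Metric.ball (0 : EuclideanSpace ℝ (Fin 2)) 1, ρTF ‖x‖) = 1)
    (ETF : ℝ)
    (hETF : ETF = ∫ x in Metric.ball (0 : EuclideanSpace ℝ (Fin 2)) 1,
        (ρTF ‖x‖ ^ 2 - ω ^ 2 * ‖x‖ ^ 2 * ρTF ‖x‖ / 4))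
    (hμ : μ = ETF + ∫ x in Metric.ball (0 : EuclideanSpace ℝ (Fin 2)) 1, ρTF ‖x‖ ^ 2)
    (ρ : EuclideanSpace ℝ (Fin 2) → ℝ)
    (hρpos : ∀ x, 0 ≤ ρ x)
    (hρ1 : IntegrableOn ρ (Metric.ball (0 : EuclideanSpace ℝ (Fin 2)) 1))
    (hρ2 : IntegrableOn (fun x => ρ x ^ 2) (Metric.ball (0 : EuclideanSpace ℝ (Fin 2)) 1))
    (hρnorm : (∫ x in Metric.ball (0 : EuclideanSpace ℝ (Fin 2)) 1, ρ x) = 1) :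
    (∫ x in Metric.ball (0 : EuclideanSpace ℝ (Fin 2)) 1, (ρ x - ρTF ‖x‖) ^ 2)
      ≤ (∫ x in Metric.ball (0 : EuclideanSpace ℝ (Fin 2)) 1,
          (ρ x ^ 2 - ω ^ 2 * ‖x‖ ^ 2 * ρ x / 4)) - ETF := by
  set s := Metric.ball (0 : EuclideanSpace ℝ (Fin 2)) 1 with hs
  have hgeq : (fun x : EuclideanSpace ℝ (Fin 2) => ρTF ‖x‖)
      = fun x => 1 / 2 * max 0 (μ + ω ^ 2 * ‖x‖ ^ 2 / 4) := funext fun x => hρTF ‖x‖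
  have hgcont : Continuous (fun x : EuclideanSpace ℝ (Fin 2) => ρTF ‖x‖) := by
    rw [hgeq]; fun_prop
  have hI : ∀ f : EuclideanSpace ℝ (Fin 2) → ℝ, Continuous f → IntegrableOn f s := by
    intro f hf
    exact (hf.continuousOn.integrableOn_compact (isCompact_closedBall _ _)).mono_set
      Metric.ball_subset_closedBall
  have hg1 : IntegrableOn (fun x : EuclideanSpace ℝ (Fin 2) => ρTF ‖x‖) s := hI _ hgcont
  have hg2 : IntegrableOn (fun x : EuclideanSpace ℝ (Fin 2) => ρTF ‖x‖ ^ 2) s :=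
    hI _ (hgcont.pow 2)
  have hVcont : Continuous (fun x : EuclideanSpace ℝ (Fin 2) => ω ^ 2 * ‖x‖ ^ 2 / 4) :=
    (continuous_const.mul ((continuous_norm).pow 2)).div_const 4
  have hVg : IntegrableOn
      (fun x : EuclideanSpace ℝ (Fin 2) => ω ^ 2 * ‖x‖ ^ 2 * ρTF ‖x‖ / 4) s :=
    hI _ (((continuous_const.mul ((continuous_norm).pow 2)).mul hgcont).div_const 4)
  -- bound for g on the ball
  have hgbd : ∀ᵐ x ∂(volume.restrict s), ‖ρTF ‖x‖‖ ≤ |1 / 2 * max 0 (μ + ω ^ 2 / 4)| := by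
    refine (ae_restrict_iff' measurableSet_ball).2 (ae_of_all _ fun x hx => ?_)
    have hx1 : ‖x‖ < 1 := by simpa [hs] using hx
    rw [hρTF]
    have h1 : max 0 (μ + ω ^ 2 * ‖x‖ ^ 2 / 4) ≤ max 0 (μ + ω ^ 2 / 4) := by
      apply max_le_max le_rfl
      have h2 : ‖x‖ ^ 2 ≤ 1 := by nlinarith [norm_nonneg x]
      nlinarith [mul_le_mul_of_nonneg_left h2 (sq_nonneg ω)]
    have h0 : (0:ℝ) ≤ max 0 (μ + ω ^ 2 * ‖x‖ ^ 2 / 4) := le_max_left _ _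
    rw [Real.norm_eq_abs, abs_of_nonneg (by positivity)]
    calc 1 / 2 * max 0 (μ + ω ^ 2 * ‖x‖ ^ 2 / 4) ≤ 1 / 2 * max 0 (μ + ω ^ 2 / 4) := by
          linarith
      _ ≤ |1 / 2 * max 0 (μ + ω ^ 2 / 4)| := le_abs_self _
  have hVbd : ∀ᵐ x ∂(volume.restrict s), ‖ω ^ 2 * ‖x‖ ^ 2 / 4‖ ≤ ω ^ 2 / 4 := by
    refine (ae_restrict_iff' measurableSet_ball).2 (ae_of_all _ fun x hx => ?_)
    have hx1 : ‖x‖ < 1 := by simpa [hs] using hx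
    rw [Real.norm_eq_abs, abs_of_nonneg (by positivity)]
    have h2 : ‖x‖ ^ 2 ≤ 1 := by nlinarith [norm_nonneg x]
    nlinarith [mul_le_mul_of_nonneg_left h2 (sq_nonneg ω)]
  have hVρ : IntegrableOn
      (fun x : EuclideanSpace ℝ (Fin 2) => ω ^ 2 * ‖x‖ ^ 2 * ρ x / 4) s := by
    have := hρ1.bdd_mul (f := fun x : EuclideanSpace ℝ (Fin 2) => ω ^ 2 * ‖x‖ ^ 2 / 4)
      hVcont.aestronglyMeasurable hVbd
    exact this.congr (ae_of_all _ fun x => by ring)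
  have hρg : IntegrableOn (fun x : EuclideanSpace ℝ (Fin 2) => ρTF ‖x‖ * ρ x) s :=
    hρ1.bdd_mul hgcont.aestronglyMeasurable hgbd
  have hC : IntegrableOn (fun x : EuclideanSpace ℝ (Fin 2) => (ρ x - ρTF ‖x‖) ^ 2) s := by
    have : Integrable (fun x : EuclideanSpace ℝ (Fin 2) =>
        ρ x ^ 2 - 2 * (ρTF ‖x‖ * ρ x) + ρTF ‖x‖ ^ 2) (volume.restrict s) :=
      (hρ2.sub (hρg.const_mul 2)).add hg2
    exact this.congr (ae_of_all _ fun x => by ring)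
  have hA : IntegrableOn
      (fun x : EuclideanSpace ℝ (Fin 2) => ρ x ^ 2 - ω ^ 2 * ‖x‖ ^ 2 * ρ x / 4) s :=
    hρ2.sub hVρ
  have hB : IntegrableOn
      (fun x : EuclideanSpace ℝ (Fin 2) => ρTF ‖x‖ ^ 2 - ω ^ 2 * ‖x‖ ^ 2 * ρTF ‖x‖ / 4) s :=
    hg2.sub hVg
  have hH : IntegrableOn (fun x : EuclideanSpace ℝ (Fin 2) =>
      (ρ x - ρTF ‖x‖) * (2 * ρTF ‖x‖ - ω ^ 2 * ‖x‖ ^ 2 / 4 - μ)) s := by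
    have : Integrable (fun x : EuclideanSpace ℝ (Fin 2) =>
        (2 * (ρTF ‖x‖ * ρ x) - ω ^ 2 * ‖x‖ ^ 2 * ρ x / 4 - μ * ρ x)
          - (2 * ρTF ‖x‖ ^ 2 - ω ^ 2 * ‖x‖ ^ 2 * ρTF ‖x‖ / 4 - μ * ρTF ‖x‖))
        (volume.restrict s) :=
      (((hρg.const_mul 2).sub hVρ).sub (hρ1.const_mul μ)).sub
        (((hg2.const_mul 2).sub hVg).sub (hg1.const_mul μ))
    exact this.congr (ae_of_all _ fun x => by ring)
  have hdiff : Integrable (fun x : EuclideanSpace ℝ (Fin 2) => μ * (ρ x - ρTF ‖x‖))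
      (volume.restrict s) := (hρ1.sub hg1).const_mul μ
  have key : (∫ x in s, (ρ x ^ 2 - ω ^ 2 * ‖x‖ ^ 2 * ρ x / 4)) - ETF
      - ∫ x in s, (ρ x - ρTF ‖x‖) ^ 2
      = ∫ x in s, (ρ x - ρTF ‖x‖) * (2 * ρTF ‖x‖ - ω ^ 2 * ‖x‖ ^ 2 / 4 - μ) := by
    have hAB : IntegrableOn (fun x : EuclideanSpace ℝ (Fin 2) =>
        (ρ x ^ 2 - ω ^ 2 * ‖x‖ ^ 2 * ρ x / 4)
          - (ρTF ‖x‖ ^ 2 - ω ^ 2 * ‖x‖ ^ 2 * ρTF ‖x‖ / 4)) s := hA.sub hB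
    rw [hETF, ← integral_sub hA hB, ← integral_sub hAB hC]
    have : (∫ x in s, ((ρ x ^ 2 - ω ^ 2 * ‖x‖ ^ 2 * ρ x / 4)
        - (ρTF ‖x‖ ^ 2 - ω ^ 2 * ‖x‖ ^ 2 * ρTF ‖x‖ / 4) - (ρ x - ρTF ‖x‖) ^ 2))
        = ∫ x in s, ((ρ x - ρTF ‖x‖) * (2 * ρTF ‖x‖ - ω ^ 2 * ‖x‖ ^ 2 / 4 - μ)
            + μ * (ρ x - ρTF ‖x‖)) := by
      congr 1; funext x; ring
    rw [this, integral_add hH hdiff]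
    have hz : (∫ x in s, μ * (ρ x - ρTF ‖x‖)) = 0 := by
      rw [integral_const_mul, integral_sub hρ1 hg1, hρnorm, hnorm]
      ring
    rw [hz, add_zero]
  have hpos : 0 ≤ ∫ x in s,
      (ρ x - ρTF ‖x‖) * (2 * ρTF ‖x‖ - ω ^ 2 * ‖x‖ ^ 2 / 4 - μ) := by
    refine setIntegral_nonneg measurableSet_ball fun x hx => ?_
    rw [hρTF]
    rcases le_or_gt 0 (μ + ω ^ 2 * ‖x‖ ^ 2 / 4) with h | h
    · rw [max_eq_right h]
      have : 2 * (1 / 2 * (μ + ω ^ 2 * ‖x‖ ^ 2 / 4)) - ω ^ 2 * ‖x‖ ^ 2 / 4 - μ = 0 := by ring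
      rw [this, mul_zero]
    · rw [max_eq_left h.le]
      have h1 : (0:ℝ) ≤ ρ x - 1 / 2 * 0 := by simpa using hρpos x
      have h2 : (0:ℝ) ≤ 2 * (1 / 2 * 0) - ω ^ 2 * ‖x‖ ^ 2 / 4 - μ := by
        simp only [mul_zero, zero_mul]; linarith
      exact mul_nonneg h1 h2
  linarith
end

section
/- If 2ρ^{TF}(r) ≥ a + br² pointwise on B₁ for constants a,b, and U ≥ 0 with ∫U = 1, then ∫_{B₁}(U − ρ^{TF})² ≤ ∫_{B₁}[U² − aU − br²U + (ρ^{TF})²] = E^{TF}-functional excess; in particular the L² distance squared between U and ρ^{TF} is bounded by ε²(E^{TF}[U] − E^{TF}[ρ^{TF}]) when a = ε²μ^{TF}, b = ω²/4. -/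
open Real MeasureTheory

theorem tf_l2_distance_excess (ε ω μ ETF : ℝ) (hε : 0 < ε) (hω : 0 < ω)
    (ρTF : ℝ → ℝ)
    (hρTF : ∀ r, ρTF r = 1 / 2 * max 0 (ε ^ 2 * μ + ω ^ 2 * r ^ 2 / 4))
    (hnorm : (∫ x in Metric.ball (0 : EuclideanSpace ℝ (Fin 2)) 1, ρTF ‖x‖) = 1)
    (hETF : ETF = ε ^ (-2 : ℤ) * ∫ x in Metric.ball (0 : EuclideanSpace ℝ (Fin 2)) 1,
        (ρTF ‖x‖ ^ 2 - ω ^ 2 * ‖x‖ ^ 2 * ρTF ‖x‖ / 4))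
    (hμ : μ = ETF + ε ^ (-2 : ℤ) *
        ∫ x in Metric.ball (0 : EuclideanSpace ℝ (Fin 2)) 1, ρTF ‖x‖ ^ 2)
    (a b : ℝ) (ha : a = ε ^ 2 * μ) (hb : b = ω ^ 2 / 4)
    (hpt : ∀ x : EuclideanSpace ℝ (Fin 2), ‖x‖ ≤ 1 → a + b * ‖x‖ ^ 2 ≤ 2 * ρTF ‖x‖)
    (U : EuclideanSpace ℝ (Fin 2) → ℝ)
    (hUpos : ∀ x, 0 ≤ U x)
    (hU1 : IntegrableOn U (Metric.ball (0 : EuclideanSpace ℝ (Fin 2)) 1))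
    (hU2 : IntegrableOn (fun x => U x ^ 2) (Metric.ball (0 : EuclideanSpace ℝ (Fin 2)) 1))
    (hUnorm : (∫ x in Metric.ball (0 : EuclideanSpace ℝ (Fin 2)) 1, U x) = 1) :
    (∫ x in Metric.ball (0 : EuclideanSpace ℝ (Fin 2)) 1, (U x - ρTF ‖x‖) ^ 2)
      ≤ (∫ x in Metric.ball (0 : EuclideanSpace ℝ (Fin 2)) 1,
          (U x ^ 2 - a * U x - b * ‖x‖ ^ 2 * U x + ρTF ‖x‖ ^ 2)) ∧
    (∫ x in Metric.ball (0 : EuclideanSpace ℝ (Fin 2)) 1,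
        (U x ^ 2 - a * U x - b * ‖x‖ ^ 2 * U x + ρTF ‖x‖ ^ 2))
      = ε ^ 2 * ((ε ^ (-2 : ℤ) * ∫ x in Metric.ball (0 : EuclideanSpace ℝ (Fin 2)) 1,
          (U x ^ 2 - ω ^ 2 * ‖x‖ ^ 2 * U x / 4)) - ETF) := by
  have hεne : (ε : ℝ) ≠ 0 := ne_of_gt hε
  set B := Metric.ball (0 : EuclideanSpace ℝ (Fin 2)) 1 with hBdef
  have hBmeas : MeasurableSet B := Metric.isOpen_ball.measurableSet
  -- continuity of ρTF ∘ norm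
  have hρfun : (fun x : EuclideanSpace ℝ (Fin 2) => ρTF ‖x‖)
      = fun x => 1 / 2 * max 0 (ε ^ 2 * μ + ω ^ 2 * ‖x‖ ^ 2 / 4) := by
    funext x; rw [hρTF]
  have hin : Continuous fun x : EuclideanSpace ℝ (Fin 2) =>
      ε ^ 2 * μ + ω ^ 2 * ‖x‖ ^ 2 / 4 :=
    continuous_const.add ((continuous_const.mul (continuous_norm.pow 2)).div_const 4)
  have hcont : Continuous fun x : EuclideanSpace ℝ (Fin 2) => ρTF ‖x‖ := by
    rw [hρfun]; exact continuous_const.mul (continuous_const.max hin)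
  -- integrability of ρ and ρ²
  have hρ1 : IntegrableOn (fun x => ρTF ‖x‖) B :=
    ((hcont.continuousOn).integrableOn_compact
      (isCompact_closedBall (0 : EuclideanSpace ℝ (Fin 2)) 1)).mono_set
      Metric.ball_subset_closedBall
  have hρ2 : IntegrableOn (fun x => ρTF ‖x‖ ^ 2) B :=
    (((hcont.pow 2).continuousOn).integrableOn_compact
      (isCompact_closedBall (0 : EuclideanSpace ℝ (Fin 2)) 1)).mono_set
      Metric.ball_subset_closedBall
  -- bound for ρ on the ball
  have hρbd : ∀ x : EuclideanSpace ℝ (Fin 2), x ∈ B →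
      0 ≤ ρTF ‖x‖ ∧ ρTF ‖x‖ ≤ 1 / 2 * max 0 (ε ^ 2 * μ + ω ^ 2 / 4) := by
    intro x hx
    have hx1 : ‖x‖ < 1 := by simpa using mem_ball_zero_iff.mp hx
    have hxsq : ‖x‖ ^ 2 ≤ 1 := by nlinarith [norm_nonneg x]
    constructor
    · rw [hρTF]; positivity
    · rw [hρTF]
      have h2 : ε ^ 2 * μ + ω ^ 2 * ‖x‖ ^ 2 / 4 ≤ ε ^ 2 * μ + ω ^ 2 / 4 := by
        have := mul_le_mul_of_nonneg_left hxsq (sq_nonneg ω)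
        linarith
      have := max_le_max (le_refl (0:ℝ)) h2
      linarith
  set C : ℝ := 1 / 2 * max 0 (ε ^ 2 * μ + ω ^ 2 / 4) with hCdef
  -- integrability of U * ρ
  have hUρ : IntegrableOn (fun x => U x * ρTF ‖x‖) B := by
    apply Integrable.mono' (hU1.const_mul C)
      (hU1.aestronglyMeasurable.mul (hcont.aestronglyMeasurable.restrict))
    filter_upwards [ae_restrict_mem hBmeas] with x hx
    obtain ⟨h0, hC⟩ := hρbd x hx
    simp only [Pi.mul_apply]
    have hu := hUpos x
    rw [Real.norm_eq_abs, abs_of_nonneg (mul_nonneg hu h0)]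
    calc U x * ρTF ‖x‖ ≤ U x * C := mul_le_mul_of_nonneg_left hC hu
      _ = C * U x := mul_comm _ _
  -- integrability of ‖x‖² * U
  have hr2U : IntegrableOn (fun x => ‖x‖ ^ 2 * U x) B := by
    apply Integrable.mono' hU1
      (((continuous_norm.pow 2).aestronglyMeasurable.restrict).mul hU1.aestronglyMeasurable)
    filter_upwards [ae_restrict_mem hBmeas] with x hx
    have hx1 : ‖x‖ < 1 := by simpa using mem_ball_zero_iff.mp hx
    have hxsq : ‖x‖ ^ 2 ≤ 1 := by nlinarith [norm_nonneg x]
    have hu := hUpos x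
    simp only [Pi.mul_apply, Pi.pow_apply]
    rw [Real.norm_eq_abs, abs_of_nonneg (mul_nonneg (sq_nonneg _) hu)]
    calc ‖x‖ ^ 2 * U x ≤ 1 * U x := mul_le_mul_of_nonneg_right hxsq hu
      _ = U x := one_mul _
  -- integrability of LHS integrand
  have hLHSfun : (fun x : EuclideanSpace ℝ (Fin 2) => (U x - ρTF ‖x‖) ^ 2)
      = fun x => (U x ^ 2 - 2 * (U x * ρTF ‖x‖)) + ρTF ‖x‖ ^ 2 := by
    funext x; ring
  have hLHSint : IntegrableOn (fun x => (U x - ρTF ‖x‖) ^ 2) B := by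
    rw [hLHSfun]; exact (hU2.sub (hUρ.const_mul 2)).add hρ2
  -- integrability of RHS pieces with explicit lambdas
  have iB : IntegrableOn (fun x : EuclideanSpace ℝ (Fin 2) =>
      U x ^ 2 - a * U x) B := hU2.sub (hU1.const_mul a)
  have iA : IntegrableOn (fun x : EuclideanSpace ℝ (Fin 2) =>
      U x ^ 2 - a * U x - b * (‖x‖ ^ 2 * U x)) B := iB.sub (hr2U.const_mul b)
  have hRHSfun : (fun x : EuclideanSpace ℝ (Fin 2) =>
      U x ^ 2 - a * U x - b * ‖x‖ ^ 2 * U x + ρTF ‖x‖ ^ 2)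
      = fun x => (U x ^ 2 - a * U x - b * (‖x‖ ^ 2 * U x)) + ρTF ‖x‖ ^ 2 := by
    funext x; ring
  have hRHSint : IntegrableOn (fun x =>
      U x ^ 2 - a * U x - b * ‖x‖ ^ 2 * U x + ρTF ‖x‖ ^ 2) B := by
    rw [hRHSfun]; exact iA.add hρ2
  constructor
  · -- the inequality
    apply setIntegral_mono_on hLHSint hRHSint hBmeas
    intro x hx
    have hx1 : ‖x‖ < 1 := by simpa using mem_ball_zero_iff.mp hx
    have hp := hpt x hx1.le
    have hu := hUpos x
    nlinarith [mul_le_mul_of_nonneg_left hp hu]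
  · -- the identity
    have hsplit : (∫ x in B, (U x ^ 2 - a * U x - b * ‖x‖ ^ 2 * U x + ρTF ‖x‖ ^ 2))
        = (∫ x in B, U x ^ 2) - a * (∫ x in B, U x) - b * (∫ x in B, ‖x‖ ^ 2 * U x)
          + ∫ x in B, ρTF ‖x‖ ^ 2 := by
      rw [hRHSfun, integral_add iA hρ2, integral_sub iB (hr2U.const_mul b),
        integral_sub hU2 (hU1.const_mul a), integral_const_mul, integral_const_mul]
    have hsplit2 : (∫ x in B, (U x ^ 2 - ω ^ 2 * ‖x‖ ^ 2 * U x / 4))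
        = (∫ x in B, U x ^ 2) - (ω ^ 2 / 4) * (∫ x in B, ‖x‖ ^ 2 * U x) := by
      rw [show (fun x : EuclideanSpace ℝ (Fin 2) => U x ^ 2 - ω ^ 2 * ‖x‖ ^ 2 * U x / 4)
          = fun x => U x ^ 2 - (ω ^ 2 / 4) * (‖x‖ ^ 2 * U x) from by funext x; ring]
      rw [integral_sub hU2 (hr2U.const_mul (ω ^ 2 / 4)), integral_const_mul]
    have hz : (ε : ℝ) ^ (-2 : ℤ) = (ε ^ 2)⁻¹ := by
      rw [zpow_neg, zpow_ofNat]
    rw [hz] at hμ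
    rw [hsplit, hsplit2, hUnorm, ha, hb, hz, hμ]
    field_simp
    ring
end
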